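/- For n ≥ 3, the group Iso(n) of isometries of the metric space (Sym(n), d_H) is isomorphic to the semidirect product (Sym(n) × Sym(n)) ⋊ Z/2Z, where the nontrivial element of Z/2Z acts on Sym(n) × Sym(n) by swapping the two factors. -/

import Mathlib

/-- The Hamming distance between two permutations of `Fin n`. -/
def hdist {n : ℕ} (φ ψ : Equiv.Perm (Fin n)) : ℕ :=
  (Finset.univ.filter fun i => φ i ≠ ψ i).card

/-- The isometry group `Iso(n)` of the metric space `(Sym(n), d_H)`, as the subgroup of
the group of bijections of `Sym(n)` consisting of the Hamming-distance-preserving ones. -/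
def IsoGroup (n : ℕ) : Subgroup (Equiv.Perm (Equiv.Perm (Fin n))) where
  carrier := { t | ∀ φ ψ, hdist (t φ) (t ψ) = hdist φ ψ }
  one_mem' := fun _ _ => rfl
  mul_mem' := by
    intro a b ha hb φ ψ
    simpa [Equiv.Perm.mul_apply] using (ha (b φ) (b ψ)).trans (hb φ ψ)
  inv_mem' := by
    intro a ha φ ψ
    have := ha (a⁻¹ φ) (a⁻¹ ψ)
    simpa [Equiv.Perm.coe_inv, Equiv.apply_symm_apply] using this.symm

/-- The automorphism of `Sym(n) × Sym(n)` swapping the two factors. -/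
def swapFactors (n : ℕ) : MulAut (Equiv.Perm (Fin n) × Equiv.Perm (Fin n)) :=
  (MulEquiv.prodComm :
    (Equiv.Perm (Fin n) × Equiv.Perm (Fin n)) ≃* (Equiv.Perm (Fin n) × Equiv.Perm (Fin n)))

/-- The action of `Z/2Z` on `Sym(n) × Sym(n)` whose nontrivial element swaps the
two factors. -/
def swapHom (n : ℕ) :
    Multiplicative (ZMod 2) →* MulAut (Equiv.Perm (Fin n) × Equiv.Perm (Fin n)) where
  toFun k := if k.toAdd = 0 then 1 else swapFactors n
  map_one' := by simp
  map_mul' a b := by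
    have hsq : swapFactors n * swapFactors n = 1 := by ext x <;> rfl
    have h : ∀ x : ZMod 2, x = 0 ∨ x = 1 := by decide
    rcases h a.toAdd with ha | ha <;> rcases h b.toAdd with hb | hb <;>
      simp [toAdd_mul, ha, hb, hsq, show (1 + 1 : ZMod 2) = 0 from by decide,
        show (1 : ZMod 2) ≠ 0 from by decide]

namespace IsoProof
open Equiv Equiv.Perm Finset

variable {n : ℕ}

lemma hdist_eq (φ ψ : Perm (Fin n)) : hdist φ ψ = (ψ⁻¹ * φ).support.card := by
  unfold hdist Equiv.Perm.support
  congr 1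
  apply Finset.filter_congr
  intro i _
  rw [not_iff_not, Equiv.Perm.mul_apply]
  exact Equiv.Perm.inv_eq_iff_eq.symm

lemma hdist_one (φ : Perm (Fin n)) : hdist φ 1 = φ.support.card := by
  simp [hdist_eq]

lemma hdist_comm (φ ψ : Perm (Fin n)) : hdist φ ψ = hdist ψ φ := by
  rw [hdist_eq, hdist_eq, ← Equiv.Perm.support_inv (φ⁻¹ * ψ)]
  congr 1

lemma hdist_mul_left (a φ ψ : Perm (Fin n)) : hdist (a * φ) (a * ψ) = hdist φ ψ := by
  rw [hdist_eq, hdist_eq]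
  congr 2
  group

lemma hdist_mul_right (a φ ψ : Perm (Fin n)) : hdist (φ * a) (ψ * a) = hdist φ ψ := by
  rw [hdist_eq, hdist_eq]
  have : (ψ * a)⁻¹ * (φ * a) = a⁻¹ * (ψ⁻¹ * φ) * a := by group
  rw [this]
  have : a⁻¹ * (ψ⁻¹ * φ) * a = a⁻¹ * (ψ⁻¹ * φ) * a⁻¹⁻¹ := by group
  rw [this, Equiv.Perm.support_conj, Finset.card_map]

lemma hdist_inv (φ ψ : Perm (Fin n)) : hdist φ⁻¹ ψ⁻¹ = hdist φ ψ := by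
  rw [hdist_eq, hdist_eq]
  have : ψ⁻¹⁻¹ * φ⁻¹ = ψ * (ψ⁻¹ * φ)⁻¹ * ψ⁻¹ := by group
  rw [this, Equiv.Perm.support_conj, Finset.card_map, Equiv.Perm.support_inv]


/-- The 3-cycle `a → b → c → a`. -/
def c3 (a b c : Fin n) : Perm (Fin n) := Equiv.swap a b * Equiv.swap b c

section c3
variable {a b c : Fin n}

lemma c3_apply_a (hab : a ≠ b) (hac : a ≠ c) : c3 a b c a = b := by
  simp [c3, Equiv.Perm.mul_apply, Equiv.swap_apply_of_ne_of_ne hab hac]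

lemma c3_apply_b (hbc : b ≠ c) (hac : a ≠ c) : c3 a b c b = c := by
  simp [c3, Equiv.Perm.mul_apply, Equiv.swap_apply_of_ne_of_ne (Ne.symm hac) (Ne.symm hbc)]

lemma c3_apply_c (hab : a ≠ b) (hbc : b ≠ c) : c3 a b c c = a := by
  simp [c3, Equiv.Perm.mul_apply]

lemma c3_apply_other {x : Fin n} (hxa : x ≠ a) (hxb : x ≠ b) (hxc : x ≠ c) :
    c3 a b c x = x := by
  simp [c3, Equiv.Perm.mul_apply, Equiv.swap_apply_of_ne_of_ne hxb hxc,
    Equiv.swap_apply_of_ne_of_ne hxa hxb]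

lemma c3_rot (a b c : Fin n) (hab : a ≠ b) (hbc : b ≠ c) (hac : a ≠ c) :
    c3 a b c = c3 b c a := by
  ext x
  by_cases hxa : x = a
  · subst hxa; rw [c3_apply_a hab hac, c3_apply_c hbc (Ne.symm hac)]
  by_cases hxb : x = b
  · subst hxb; rw [c3_apply_b hbc hac, c3_apply_a hbc (Ne.symm hab)]
  by_cases hxc : x = c
  · subst hxc; rw [c3_apply_c hab hbc, c3_apply_b (Ne.symm hac) (Ne.symm hab)]
  · rw [c3_apply_other hxa hxb hxc, c3_apply_other hxb hxc hxa]

lemma c3_inv (a b c : Fin n) (hab : a ≠ b) (hbc : b ≠ c) (hac : a ≠ c) :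
    (c3 a b c)⁻¹ = c3 a c b := by
  rw [eq_comm, eq_inv_iff_mul_eq_one]
  ext x
  by_cases hxa : x = a
  · subst hxa
    rw [Equiv.Perm.mul_apply, c3_apply_a hab hac, c3_apply_c hac (Ne.symm hbc)]; rfl
  by_cases hxb : x = b
  · subst hxb
    rw [Equiv.Perm.mul_apply, c3_apply_b hbc hac, c3_apply_b (Ne.symm hbc) hab]; rfl
  by_cases hxc : x = c
  · subst hxc
    rw [Equiv.Perm.mul_apply, c3_apply_c hab hbc, c3_apply_a hac hab]; rfl
  · rw [Equiv.Perm.mul_apply, c3_apply_other hxa hxb hxc, c3_apply_other hxa hxc hxb]; rfl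

lemma support_c3 (hab : a ≠ b) (hbc : b ≠ c) (hac : a ≠ c) :
    (c3 a b c).support = {a, b, c} := by
  ext x
  simp only [Equiv.Perm.mem_support, Finset.mem_insert, Finset.mem_singleton]
  constructor
  · intro h
    by_contra hx
    push_neg at hx
    exact h (c3_apply_other hx.1 hx.2.1 hx.2.2)
  · rintro (rfl | rfl | rfl)
    · rw [c3_apply_a hab hac]; exact Ne.symm hab
    · rw [c3_apply_b hbc hac]; exact Ne.symm hbc
    · rw [c3_apply_c hab hbc]; exact hac

lemma card_pair' {x y : Fin n} (h : x ≠ y) : ({x, y} : Finset (Fin n)).card = 2 := by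
  rw [Finset.card_insert_of_notMem (by simp [h]), Finset.card_singleton]

lemma card_triple {x y z : Fin n} (hxy : x ≠ y) (hxz : x ≠ z) (hyz : y ≠ z) :
    ({x, y, z} : Finset (Fin n)).card = 3 := by
  rw [Finset.card_insert_of_notMem (by simp [hxy, hxz]), card_pair' hyz]

lemma card_quad {x y z w : Fin n} (hxy : x ≠ y) (hxz : x ≠ z) (hxw : x ≠ w)
    (hyz : y ≠ z) (hyw : y ≠ w) (hzw : z ≠ w) :
    ({x, y, z, w} : Finset (Fin n)).card = 4 := by
  rw [Finset.card_insert_of_notMem (by simp [hxy, hxz, hxw]), card_triple hyz hyw hzw]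

lemma card_support_c3 (hab : a ≠ b) (hbc : b ≠ c) (hac : a ≠ c) :
    (c3 a b c).support.card = 3 := by
  rw [support_c3 hab hbc hac, card_triple hab hac hbc]

end c3


section dist
variable {i j k l a b c : Fin n}

lemma swap_mul_swap_eq_c3 (hij : i ≠ j) (hik : i ≠ k) (hjk : j ≠ k) :
    Equiv.swap i k * Equiv.swap i j = c3 i j k := by
  ext x
  by_cases hxi : x = i
  · subst hxi
    rw [Equiv.Perm.mul_apply, Equiv.swap_apply_left,
      Equiv.swap_apply_of_ne_of_ne (Ne.symm hij) hjk, c3_apply_a hij hik]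
  by_cases hxj : x = j
  · subst hxj
    rw [Equiv.Perm.mul_apply, Equiv.swap_apply_right, Equiv.swap_apply_left,
      c3_apply_b hjk hik]
  by_cases hxk : x = k
  · subst hxk
    rw [Equiv.Perm.mul_apply, Equiv.swap_apply_of_ne_of_ne (Ne.symm hik) (Ne.symm hjk),
      Equiv.swap_apply_right, c3_apply_c hij hjk]
  · rw [Equiv.Perm.mul_apply, Equiv.swap_apply_of_ne_of_ne hxi hxj,
      Equiv.swap_apply_of_ne_of_ne hxi hxk, c3_apply_other hxi hxj hxk]

lemma DB1 (hij : i ≠ j) (hik : i ≠ k) (hjk : j ≠ k) :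
    hdist (Equiv.swap i j) (Equiv.swap i k) = 3 := by
  rw [hdist_eq, Equiv.swap_inv, swap_mul_swap_eq_c3 hij hik hjk,
    card_support_c3 hij hjk hik]

lemma support_swap_mul_swap (hij : i ≠ j) (hik : i ≠ k) (hil : i ≠ l) (hjk : j ≠ k)
    (hjl : j ≠ l) (hkl : k ≠ l) :
    (Equiv.swap i j * Equiv.swap k l).support = {i, j, k, l} := by
  ext x
  simp only [Equiv.Perm.mem_support, Finset.mem_insert, Finset.mem_singleton,
    Equiv.Perm.mul_apply]
  constructor
  · intro h
    by_contra hx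
    push_neg at hx
    rw [Equiv.swap_apply_of_ne_of_ne hx.2.2.1 hx.2.2.2,
      Equiv.swap_apply_of_ne_of_ne hx.1 hx.2.1] at h
    exact h rfl
  · rintro (rfl | rfl | rfl | rfl)
    · rw [Equiv.swap_apply_of_ne_of_ne hik hil, Equiv.swap_apply_left]; exact Ne.symm hij
    · rw [Equiv.swap_apply_of_ne_of_ne hjk hjl, Equiv.swap_apply_right]; exact hij
    · rw [Equiv.swap_apply_left, Equiv.swap_apply_of_ne_of_ne (Ne.symm hil) (Ne.symm hjl)]
      exact Ne.symm hkl
    · rw [Equiv.swap_apply_right, Equiv.swap_apply_of_ne_of_ne (Ne.symm hik) (Ne.symm hjk)]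
      exact hkl

lemma DB2 (hij : i ≠ j) (hik : i ≠ k) (hil : i ≠ l) (hjk : j ≠ k) (hjl : j ≠ l)
    (hkl : k ≠ l) : hdist (Equiv.swap i j) (Equiv.swap k l) = 4 := by
  rw [hdist_eq, Equiv.swap_inv,
    support_swap_mul_swap hkl (Ne.symm hik) (Ne.symm hjk) (Ne.symm hil) (Ne.symm hjl) hij,
    card_quad hkl (Ne.symm hik) (Ne.symm hjk) (Ne.symm hil) (Ne.symm hjl) hij]

lemma c3_alt (hab : a ≠ b) (hbc : b ≠ c) (hac : a ≠ c) :
    c3 a b c = Equiv.swap b c * Equiv.swap a c := by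
  have h := Equiv.swap_mul_swap_mul_swap hab hac
  -- swap b c * swap a b * swap b c = swap c a
  rw [c3]
  calc Equiv.swap a b * Equiv.swap b c
      = Equiv.swap b c * (Equiv.swap b c * Equiv.swap a b * Equiv.swap b c) := by
        rw [← mul_assoc, ← mul_assoc, Equiv.swap_mul_self, one_mul]
    _ = Equiv.swap b c * Equiv.swap a c := by rw [h, Equiv.swap_comm c a]

lemma DB3a (hab : a ≠ b) (hbc : b ≠ c) (hac : a ≠ c) :
    hdist (c3 a b c) (Equiv.swap a b) = 2 := by
  rw [hdist_eq, Equiv.swap_inv, c3, ← mul_assoc, Equiv.swap_mul_self, one_mul,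
    Equiv.Perm.card_support_swap hbc]

lemma DB3b (hab : a ≠ b) (hbc : b ≠ c) (hac : a ≠ c) :
    hdist (c3 a b c) (Equiv.swap b c) = 2 := by
  rw [hdist_eq, Equiv.swap_inv, c3, ← mul_assoc, Equiv.swap_mul_swap_mul_swap hab hac,
    Equiv.Perm.card_support_swap (Ne.symm hac)]

lemma DB3c (hab : a ≠ b) (hbc : b ≠ c) (hac : a ≠ c) :
    hdist (c3 a b c) (Equiv.swap a c) = 2 := by
  rw [hdist_eq, Equiv.swap_inv, c3_alt hab hbc hac, ← mul_assoc, Equiv.swap_comm a c,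
    Equiv.swap_mul_swap_mul_swap hbc (Ne.symm hab), Equiv.Perm.card_support_swap hab]

end dist


section dist2
variable {i j k l x y p q : Fin n} {w s : Perm (Fin n)}

lemma c3_mul_c3_a (hij : i ≠ j) (hik : i ≠ k) (hil : i ≠ l) (hjk : j ≠ k)
    (hjl : j ≠ l) (hkl : k ≠ l) : c3 i l j * c3 i j k = c3 j k l := by
  ext x
  by_cases hxi : x = i
  · subst hxi
    rw [Equiv.Perm.mul_apply, c3_apply_a hij hik, c3_apply_c hil (Ne.symm hjl),
      c3_apply_other hij hik hil]
  by_cases hxj : x = j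
  · subst hxj
    rw [Equiv.Perm.mul_apply, c3_apply_b hjk hik, c3_apply_other (Ne.symm hik)
      hkl (Ne.symm hjk), c3_apply_a hjk hjl]
  by_cases hxk : x = k
  · subst hxk
    rw [Equiv.Perm.mul_apply, c3_apply_c hij hjk, c3_apply_a hil hij,
      c3_apply_b hkl hjl]
  by_cases hxl : x = l
  · subst hxl
    rw [Equiv.Perm.mul_apply, c3_apply_other hxi hxj hxk, c3_apply_b (Ne.symm hjl) hij,
      c3_apply_c hjk hkl]
  · rw [Equiv.Perm.mul_apply, c3_apply_other hxi hxj hxk, c3_apply_other hxi hxl hxj,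
      c3_apply_other hxj hxk hxl]

lemma c3_mul_c3_b (hij : i ≠ j) (hik : i ≠ k) (hil : i ≠ l) (hjk : j ≠ k)
    (hjl : j ≠ l) (hkl : k ≠ l) :
    c3 i j l * c3 i j k = Equiv.swap i l * Equiv.swap j k := by
  ext x
  by_cases hxi : x = i
  · subst hxi
    rw [Equiv.Perm.mul_apply, c3_apply_a hij hik, c3_apply_b hjl hil,
      Equiv.Perm.mul_apply, Equiv.swap_apply_of_ne_of_ne hij hik, Equiv.swap_apply_left]
  by_cases hxj : x = j
  · subst hxj
    rw [Equiv.Perm.mul_apply, c3_apply_b hjk hik, c3_apply_other (Ne.symm hik)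
      (Ne.symm hjk) hkl, Equiv.Perm.mul_apply, Equiv.swap_apply_left,
      Equiv.swap_apply_of_ne_of_ne (Ne.symm hik) hkl]
  by_cases hxk : x = k
  · subst hxk
    rw [Equiv.Perm.mul_apply, c3_apply_c hij hjk, c3_apply_a hij hil,
      Equiv.Perm.mul_apply, Equiv.swap_apply_right, Equiv.swap_apply_of_ne_of_ne
      (Ne.symm hij) hjl]
  by_cases hxl : x = l
  · subst hxl
    rw [Equiv.Perm.mul_apply, c3_apply_other hxi hxj hxk, c3_apply_c hij hjl,
      Equiv.Perm.mul_apply, Equiv.swap_apply_of_ne_of_ne (Ne.symm hjl) (Ne.symm hkl),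
      Equiv.swap_apply_right]
  · rw [Equiv.Perm.mul_apply, c3_apply_other hxi hxj hxk, c3_apply_other hxi hxj hxl,
      Equiv.Perm.mul_apply, Equiv.swap_apply_of_ne_of_ne hxj hxk,
      Equiv.swap_apply_of_ne_of_ne hxi hxl]

lemma DB4 (hij : i ≠ j) (hik : i ≠ k) (hil : i ≠ l) (hjk : j ≠ k) (hjl : j ≠ l)
    (hkl : k ≠ l) : hdist (c3 i j k) (c3 i j l) = 3 := by
  rw [hdist_eq, c3_inv i j l hij hjl hil, c3_mul_c3_a hij hik hil hjk hjl hkl,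
    card_support_c3 hjk hkl hjl]

lemma DB5 (hij : i ≠ j) (hik : i ≠ k) (hil : i ≠ l) (hjk : j ≠ k) (hjl : j ≠ l)
    (hkl : k ≠ l) : hdist (c3 i j k) (c3 i l j) = 4 := by
  rw [hdist_eq, c3_inv i l j hil (Ne.symm hjl) hij, c3_mul_c3_b hij hik hil hjk hjl hkl,
    support_swap_mul_swap hil hij hik (Ne.symm hjl) (Ne.symm hkl) hjk,
    card_quad hil hij hik (Ne.symm hjl) (Ne.symm hkl) hjk]

lemma support_eq_pair (hpq : p ≠ q) (h : w.support = {p, q}) : w = Equiv.swap p q := by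
  have hwp : w p = q := by
    have h1 : w p ≠ p := by
      rw [← Equiv.Perm.mem_support, h]; simp
    have h2 : w p ∈ w.support := Equiv.Perm.apply_mem_support.mpr (by rw [h]; simp)
    rw [h] at h2
    simp only [Finset.mem_insert, Finset.mem_singleton] at h2
    rcases h2 with h2 | h2
    · exact absurd h2 h1
    · exact h2
  have hwq : w q = p := by
    have h1 : w q ≠ q := by
      rw [← Equiv.Perm.mem_support, h]; simp
    have h2 : w q ∈ w.support := Equiv.Perm.apply_mem_support.mpr (by rw [h]; simp)
    rw [h] at h2
    simp only [Finset.mem_insert, Finset.mem_singleton] at h2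
    rcases h2 with h2 | h2
    · exact h2
    · exact absurd h2 h1
  ext x
  by_cases hxp : x = p
  · subst hxp; rw [hwp, Equiv.swap_apply_left]
  by_cases hxq : x = q
  · subst hxq; rw [hwq, Equiv.swap_apply_right]
  · rw [Equiv.swap_apply_of_ne_of_ne hxp hxq]
    have : x ∉ w.support := by rw [h]; simp [hxp, hxq]
    rw [Equiv.Perm.notMem_support.mp this]

lemma isSwap_of_card_two (h : w.support.card = 2) :
    ∃ p q, p ≠ q ∧ w = Equiv.swap p q := by
  obtain ⟨p, q, hpq, hs⟩ := Finset.card_eq_two.mp h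
  exact ⟨p, q, hpq, support_eq_pair hpq hs⟩

lemma swap_with_point (hs : ∃ u v, u ≠ v ∧ s = Equiv.swap u v) (hp : p ∈ s.support) :
    ∃ x, x ≠ p ∧ s = Equiv.swap p x := by
  obtain ⟨u, v, huv, rfl⟩ := hs
  rw [Equiv.Perm.support_swap huv, Finset.mem_insert, Finset.mem_singleton] at hp
  rcases hp with rfl | rfl
  · exact ⟨v, Ne.symm huv, rfl⟩
  · exact ⟨u, huv, Equiv.swap_comm u p⟩

lemma not_mem_support_of_hdist_two (hxy : x ≠ y) (hw : w.support.card = 3)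
    (hd : hdist (Equiv.swap x y) w = 2) : x ∈ w.support := by
  by_contra hx
  have hwx : w x = x := Equiv.Perm.notMem_support.mp hx
  set m := w⁻¹ * Equiv.swap x y with hm
  have hdm : m.support.card = 2 := by rw [← hd, hdist_eq]
  have hsub : insert x (w.support.erase y) ⊆ m.support := by
    intro z hz
    rw [Finset.mem_insert] at hz
    rcases hz with rfl | hz
    · rw [Equiv.Perm.mem_support, hm, Equiv.Perm.mul_apply, Equiv.swap_apply_left]
      intro hcon
      have : y = w z := by
        rw [← hcon]; simp
      rw [hwx] at this
      exact hxy (this.symm)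
    · rw [Finset.mem_erase] at hz
      have hzx : z ≠ x := fun h => hx (h ▸ hz.2)
      rw [Equiv.Perm.mem_support, hm, Equiv.Perm.mul_apply,
        Equiv.swap_apply_of_ne_of_ne hzx hz.1]
      rw [← Equiv.Perm.mem_support, Equiv.Perm.support_inv]
      exact hz.2
  have hcard : 3 ≤ m.support.card := by
    have h1 : x ∉ w.support.erase y := fun h => hx (Finset.mem_of_mem_erase h)
    have h2 : 2 ≤ (w.support.erase y).card := by
      by_cases hy : y ∈ w.support
      · rw [Finset.card_erase_of_mem hy, hw]
      · rw [Finset.erase_eq_of_notMem hy, hw]; omega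
    calc 3 ≤ (insert x (w.support.erase y)).card := by
          rw [Finset.card_insert_of_notMem h1]; omega
      _ ≤ m.support.card := Finset.card_le_card hsub
  omega

lemma DB6 (hxy : x ≠ y) (hw : w.support.card = 3)
    (hd : hdist (Equiv.swap x y) w = 2) : x ∈ w.support ∧ y ∈ w.support := by
  refine ⟨not_mem_support_of_hdist_two hxy hw hd, ?_⟩
  rw [Equiv.swap_comm] at hd
  exact not_mem_support_of_hdist_two (Ne.symm hxy) hw hd

lemma exists_third (hn : 3 ≤ n) (i j : Fin n) : ∃ k, k ≠ i ∧ k ≠ j := by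
  have hcard : (Finset.univ \ {i, j} : Finset (Fin n)).Nonempty := by
    rw [← Finset.card_pos, Finset.card_sdiff_of_subset (Finset.subset_univ _)]
    have h2 : ({i, j} : Finset (Fin n)).card ≤ 2 := Finset.card_insert_le _ _ |>.trans (by simp)
    simp only [Finset.card_univ, Fintype.card_fin]
    omega
  obtain ⟨k, hk⟩ := hcard
  rw [Finset.mem_sdiff, Finset.mem_insert, Finset.mem_singleton] at hk
  push_neg at hk
  exact ⟨k, hk.2.1, hk.2.2⟩

end dist2


section counting
variable {i j k : Fin n}

lemma card_filter_split2 (p : Fin n → Prop) [DecidablePred p] (hij : i ≠ j) :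
    (Finset.univ.filter p).card =
      ((Finset.univ \ {i, j}).filter p).card
        + ((if p i then 1 else 0) + (if p j then 1 else 0)) := by
  have huniv : (Finset.univ : Finset (Fin n)) = (Finset.univ \ {i, j}) ∪ {i, j} := by
    rw [Finset.sdiff_union_of_subset (Finset.subset_univ _)]
  nth_rewrite 1 [huniv]
  rw [Finset.filter_union, Finset.card_union_of_disjoint
    (Finset.disjoint_filter_filter Finset.sdiff_disjoint)]
  congr 1
  rw [show ({i, j} : Finset (Fin n)) = insert i {j} from rfl, Finset.filter_insert,
    Finset.filter_singleton]
  by_cases hpi : p i <;> by_cases hpj : p j <;>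
    simp [hpi, hpj, Finset.card_insert_of_notMem, hij]

lemma card_filter_split3 (p : Fin n → Prop) [DecidablePred p] (hij : i ≠ j)
    (hik : i ≠ k) (hjk : j ≠ k) :
    (Finset.univ.filter p).card =
      ((Finset.univ \ {i, j, k}).filter p).card
        + ((if p i then 1 else 0) + (if p j then 1 else 0) + (if p k then 1 else 0)) := by
  have huniv : (Finset.univ : Finset (Fin n)) = (Finset.univ \ {i, j, k}) ∪ {i, j, k} := by
    rw [Finset.sdiff_union_of_subset (Finset.subset_univ _)]
  nth_rewrite 1 [huniv]
  rw [Finset.filter_union, Finset.card_union_of_disjoint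
    (Finset.disjoint_filter_filter Finset.sdiff_disjoint)]
  congr 1
  rw [show ({i, j, k} : Finset (Fin n)) = insert i (insert j {k}) from rfl,
    Finset.filter_insert, Finset.filter_insert, Finset.filter_singleton]
  by_cases hpi : p i <;> by_cases hpj : p j <;> by_cases hpk : p k <;>
    simp [hpi, hpj, hpk, Finset.card_insert_of_notMem, hij, hik, hjk]

lemma E2 (x : Perm (Fin n)) (hij : i ≠ j) :
    hdist x (Equiv.swap i j) + ((if x i ≠ i then 1 else 0) + (if x j ≠ j then 1 else 0))
      = hdist x 1 + ((if x i ≠ j then 1 else 0) + (if x j ≠ i then 1 else 0)) := by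
  have h1 : hdist x (Equiv.swap i j) =
      ((Finset.univ \ {i, j}).filter (fun z => x z ≠ Equiv.swap i j z)).card
        + ((if x i ≠ j then 1 else 0) + (if x j ≠ i then 1 else 0)) := by
    rw [show hdist x (Equiv.swap i j)
        = (Finset.univ.filter fun z => x z ≠ Equiv.swap i j z).card from rfl,
      card_filter_split2 _ hij]
    simp only [Equiv.swap_apply_left, Equiv.swap_apply_right]
  have h2 : hdist x 1 =
      ((Finset.univ \ {i, j}).filter (fun z => x z ≠ z)).card
        + ((if x i ≠ i then 1 else 0) + (if x j ≠ j then 1 else 0)) := by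
    rw [show hdist x 1 = (Finset.univ.filter fun z => x z ≠ (1 : Perm (Fin n)) z).card
        from rfl, card_filter_split2 _ hij]
    simp only [Equiv.Perm.one_apply]
    rfl
  have h3 : ((Finset.univ \ {i, j}).filter (fun z => x z ≠ Equiv.swap i j z)).card
      = ((Finset.univ \ {i, j}).filter (fun z => x z ≠ z)).card := by
    congr 1
    apply Finset.filter_congr
    intro z hz
    simp only [Finset.mem_sdiff, Finset.mem_insert, Finset.mem_singleton] at hz
    push_neg at hz
    rw [Equiv.swap_apply_of_ne_of_ne hz.2.1 hz.2.2]
  rw [h1, h2, h3]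
  ring

lemma E3 (x : Perm (Fin n)) (hij : i ≠ j) (hik : i ≠ k) (hjk : j ≠ k) :
    hdist x (c3 i j k) + ((if x i ≠ i then 1 else 0) + (if x j ≠ j then 1 else 0)
        + (if x k ≠ k then 1 else 0))
      = hdist x 1 + ((if x i ≠ j then 1 else 0) + (if x j ≠ k then 1 else 0)
        + (if x k ≠ i then 1 else 0)) := by
  have h1 : hdist x (c3 i j k) =
      ((Finset.univ \ {i, j, k}).filter (fun z => x z ≠ c3 i j k z)).card
        + ((if x i ≠ j then 1 else 0) + (if x j ≠ k then 1 else 0)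
            + (if x k ≠ i then 1 else 0)) := by
    rw [show hdist x (c3 i j k)
        = (Finset.univ.filter fun z => x z ≠ c3 i j k z).card from rfl,
      card_filter_split3 _ hij hik hjk]
    rw [c3_apply_a hij hik, c3_apply_b hjk hik, c3_apply_c hij hjk]
  have h2 : hdist x 1 =
      ((Finset.univ \ {i, j, k}).filter (fun z => x z ≠ z)).card
        + ((if x i ≠ i then 1 else 0) + (if x j ≠ j then 1 else 0)
            + (if x k ≠ k then 1 else 0)) := by
    rw [show hdist x 1 = (Finset.univ.filter fun z => x z ≠ (1 : Perm (Fin n)) z).card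
        from rfl, card_filter_split3 _ hij hik hjk]
    simp only [Equiv.Perm.one_apply]
    rfl
  have h3 : ((Finset.univ \ {i, j, k}).filter (fun z => x z ≠ c3 i j k z)).card
      = ((Finset.univ \ {i, j, k}).filter (fun z => x z ≠ z)).card := by
    congr 1
    apply Finset.filter_congr
    intro z hz
    simp only [Finset.mem_sdiff, Finset.mem_insert, Finset.mem_singleton] at hz
    push_neg at hz
    rw [c3_apply_other hz.2.1 hz.2.2.1 hz.2.2.2]
  rw [h1, h2, h3]
  ring

end counting


section determination

lemma ite_le_one {P : Prop} [Decidable P] : (if P then 1 else 0) ≤ 1 := by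
  split <;> omega

lemma aux1 {g h : Perm (Fin n)} {i : Fin n}
    (H0 : hdist g 1 = hdist h 1)
    (H2 : ∀ p q : Fin n, p ≠ q → hdist g (Equiv.swap p q) = hdist h (Equiv.swap p q))
    (hgi : g i = i) (hhi : h i ≠ i) : False := by
  obtain ⟨j, hj⟩ : ∃ j, h i = j := ⟨h i, rfl⟩
  have hij : i ≠ j := fun hc => hhi (by rw [hj]; exact hc.symm)
  have hhjj : h j ≠ j := fun hc => hij (h.injective (by rw [hj, hc]))
  have hgij : g i ≠ j := by rw [hgi]; exact hij
  have e2g := E2 g hij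
  have e2h := E2 h hij
  rw [H2 i j hij, H0] at e2g
  rw [if_neg (not_not_intro hgi), if_pos hgij] at e2g
  rw [if_pos hhi, if_pos hhjj, if_neg (not_not_intro hj)] at e2h
  have b1 : (if g j ≠ j then 1 else 0) ≤ 1 := ite_le_one
  have b2 : (if g j ≠ i then 1 else 0) ≤ 1 := ite_le_one
  have b3 : (if h j ≠ i then 1 else 0) ≤ 1 := ite_le_one
  omega

lemma determined (hn : 3 ≤ n) {g h : Perm (Fin n)}
    (H0 : hdist g 1 = hdist h 1)
    (H2 : ∀ p q : Fin n, p ≠ q → hdist g (Equiv.swap p q) = hdist h (Equiv.swap p q))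
    (H3 : ∀ p q r : Fin n, p ≠ q → p ≠ r → q ≠ r →
      hdist g (c3 p q r) = hdist h (c3 p q r)) :
    g = h := by
  have key : ∀ i, g i = h i := by
    intro i
    by_contra hne
    by_cases hgi : g i = i
    · exact aux1 H0 H2 hgi (fun hh => hne (by rw [hgi, hh]))
    by_cases hhi : h i = i
    · exact aux1 H0.symm (fun p q hpq => (H2 p q hpq).symm) hhi hgi
    -- main case
    obtain ⟨j, hj⟩ : ∃ j, g i = j := ⟨g i, rfl⟩
    have hij : i ≠ j := fun hc => hgi (by rw [hj]; exact hc.symm)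
    have hhij : h i ≠ j := fun hc => hne (by rw [hj, ← hc])
    have hgij : g i ≠ i := fun hc => hgi hc
    have hgjj : g j ≠ j := fun hc => hij (g.injective (by rw [hj, hc]))
    -- step 2 : h j = i and g j ≠ i
    have e2g := E2 g hij
    have e2h := E2 h hij
    rw [H2 i j hij, H0] at e2g
    rw [if_pos hgij, if_pos hgjj, if_neg (not_not_intro hj)] at e2g
    rw [if_pos hhi, if_pos hhij] at e2h
    have hgji : g j ≠ i := by
      intro hc
      rw [if_neg (not_not_intro hc)] at e2g
      have b1 : (if h j ≠ j then 1 else 0) ≤ 1 := ite_le_one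
      have b2 : (if h j ≠ i then 1 else 0) ≤ 1 := ite_le_one
      omega
    rw [if_pos hgji] at e2g
    have hhji : h j = i := by
      by_contra hc
      rw [if_pos hc] at e2h
      have b1 : (if h j ≠ j then 1 else 0) ≤ 1 := ite_le_one
      omega
    have hhjj : h j ≠ j := by rw [hhji]; exact hij
    -- step 3 : g fixes everything outside {i, j}
    have claim : ∀ k, k ≠ i → k ≠ j → g k = k := by
      intro k hki hkj
      by_contra hgk
      have hik : i ≠ k := Ne.symm hki
      have hjk : j ≠ k := Ne.symm hkj
      have e3g := E3 g hij hik hjk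
      have e3h := E3 h hij hik hjk
      rw [H3 i j k hij hik hjk, H0] at e3g
      rw [if_pos hgij, if_pos hgjj, if_pos hgk, if_neg (not_not_intro hj)] at e3g
      have hhjk : h j ≠ k := by rw [hhji]; exact Ne.symm hki
      have hhki : h k ≠ i := by
        intro hc
        exact hkj (h.injective (by rw [hc, hhji]))
      rw [if_pos hhi, if_pos hhjj, if_pos hhij, if_pos hhjk, if_pos hhki] at e3h
      have b1 : (if g j ≠ k then 1 else 0) ≤ 1 := ite_le_one
      have b2 : (if g k ≠ i then 1 else 0) ≤ 1 := ite_le_one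
      have b3 : (if h k ≠ k then 1 else 0) ≤ 1 := ite_le_one
      omega
    -- step 4 : contradiction
    have hzj : g j ≠ j := hgjj
    have : g (g j) = g j := claim (g j) hgji hgjj
    exact hgjj (g.injective this)
  exact Equiv.ext key

end determination


section stepB
variable {t : Perm (Perm (Fin n))}

lemma tsupp (hd : ∀ φ ψ, hdist (t φ) (t ψ) = hdist φ ψ) (h1 : t 1 = 1)
    (φ : Perm (Fin n)) : (t φ).support.card = φ.support.card := by
  have := hd φ 1
  rw [h1, hdist_one, hdist_one] at this
  exact this

lemma tswap (hd : ∀ φ ψ, hdist (t φ) (t ψ) = hdist φ ψ) (h1 : t 1 = 1)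
    {i j : Fin n} (hij : i ≠ j) :
    ∃ x y, x ≠ y ∧ t (Equiv.swap i j) = Equiv.swap x y := by
  have h2 : (t (Equiv.swap i j)).support.card = 2 := by
    rw [tsupp hd h1, Equiv.Perm.card_support_swap hij]
  exact isSwap_of_card_two h2

lemma hd_inv (hd : ∀ φ ψ, hdist (t φ) (t ψ) = hdist φ ψ) (φ ψ : Perm (Fin n)) :
    hdist (t⁻¹ φ) (t⁻¹ ψ) = hdist φ ψ := by
  have := hd (t⁻¹ φ) (t⁻¹ ψ)
  rw [Equiv.Perm.coe_inv, Equiv.apply_symm_apply, Equiv.apply_symm_apply] at this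
  exact this.symm

lemma swap_ne_swap {i j k : Fin n} (hij : i ≠ j) (hjk : j ≠ k) :
    Equiv.swap i j ≠ Equiv.swap i k := by
  intro hc
  have := DFunLike.congr_fun hc i
  rw [Equiv.swap_apply_left, Equiv.swap_apply_left] at this
  exact hjk this

lemma common_pt (hd : ∀ φ ψ, hdist (t φ) (t ψ) = hdist φ ψ) (h1 : t 1 = 1)
    {i j k : Fin n} (hij : i ≠ j) (hik : i ≠ k) (hjk : j ≠ k) :
    ∃ p q r, q ≠ r ∧ p ≠ q ∧ p ≠ r ∧
      t (Equiv.swap i j) = Equiv.swap p q ∧ t (Equiv.swap i k) = Equiv.swap p r := by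
  obtain ⟨x, y, hxy, hxy'⟩ := tswap hd h1 hij
  obtain ⟨u, v, huv, huv'⟩ := tswap hd h1 hik
  have hne : Equiv.swap x y ≠ Equiv.swap u v := by
    rw [← hxy', ← huv']
    intro hc
    exact swap_ne_swap hij hjk (t.injective hc)
  have hd3 : hdist (Equiv.swap x y) (Equiv.swap u v) = 3 := by
    rw [← hxy', ← huv', hd, DB1 hij hik hjk]
  by_cases hxu : x = u
  · subst hxu
    refine ⟨x, y, v, ?_, hxy, huv, hxy', huv'⟩
    intro hc; exact hne (by rw [hc])
  by_cases hxv : x = v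
  · subst hxv
    refine ⟨x, y, u, ?_, hxy, Ne.symm huv, hxy', by rw [huv', Equiv.swap_comm]⟩
    intro hc; exact hne (by rw [hc, Equiv.swap_comm])
  by_cases hyu : y = u
  · subst hyu
    refine ⟨y, x, v, ?_, Ne.symm hxy, huv, by rw [hxy', Equiv.swap_comm], huv'⟩
    intro hc; exact hne (by rw [hc, Equiv.swap_comm])
  by_cases hyv : y = v
  · subst hyv
    refine ⟨y, x, u, hxu, Ne.symm hxy, Ne.symm huv,
      by rw [hxy', Equiv.swap_comm], by rw [huv', Equiv.swap_comm]⟩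
  · exfalso
    rw [DB2 hxy hxu hxv hyu hyv huv] at hd3
    omega

lemma LB1 (hn : 3 ≤ n) (hd : ∀ φ ψ, hdist (t φ) (t ψ) = hdist φ ψ) (h1 : t 1 = 1)
    (i : Fin n) : ∃ p, ∀ j, j ≠ i → p ∈ (t (Equiv.swap i j)).support := by
  obtain ⟨j, hji, -⟩ := exists_third hn i i
  obtain ⟨k, hki, hkj⟩ := exists_third hn i j
  obtain ⟨p, q, r, hqr, hpq, hpr, htj, htk⟩ :=
    common_pt hd h1 (Ne.symm hji) (Ne.symm hki) (Ne.symm hkj)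
  refine ⟨p, ?_⟩
  intro j' hj'
  by_cases hj'j : j' = j
  · subst hj'j; rw [htj, Equiv.Perm.support_swap hpq]; simp
  by_cases hj'k : j' = k
  · subst hj'k; rw [htk, Equiv.Perm.support_swap hpr]; simp
  -- j' is a fourth point
  obtain ⟨u, v, huv, htj'⟩ := tswap hd h1 (Ne.symm hj')
  by_contra hp
  rw [htj', Equiv.Perm.support_swap huv, Finset.mem_insert, Finset.mem_singleton] at hp
  push_neg at hp
  obtain ⟨hpu, hpv⟩ := hp
  -- q must be in {u, v}
  have hd3q : hdist (Equiv.swap p q) (Equiv.swap u v) = 3 := by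
    rw [← htj, ← htj', hd, DB1 (Ne.symm hji) (Ne.symm hj') (fun hc => hj'j hc.symm)]
  have hq : q = u ∨ q = v := by
    by_contra hc
    push_neg at hc
    rw [DB2 hpq hpu hpv hc.1 hc.2 huv] at hd3q
    omega
  have hd3r : hdist (Equiv.swap p r) (Equiv.swap u v) = 3 := by
    rw [← htk, ← htj', hd, DB1 (Ne.symm hki) (Ne.symm hj') (fun hc => hj'k hc.symm)]
  have hr : r = u ∨ r = v := by
    by_contra hc
    push_neg at hc
    rw [DB2 hpr hpu hpv hc.1 hc.2 huv] at hd3r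
    omega
  have htj'' : t (Equiv.swap i j') = Equiv.swap q r := by
    rcases hq with rfl | rfl
    · rcases hr with rfl | rfl
      · exact absurd rfl hqr
      · exact htj'
    · rcases hr with rfl | rfl
      · rw [htj', Equiv.swap_comm]
      · exact absurd rfl hqr
  -- now the 3-cycle contradiction
  have hw3 : (t⁻¹ (c3 p q r)).support.card = 3 := by
    have h1' : t⁻¹ 1 = 1 := by
      apply t.injective
      rw [Equiv.Perm.coe_inv, Equiv.apply_symm_apply, h1]
    rw [tsupp (hd_inv hd) h1', card_support_c3 hpq hqr hpr]
  have hmem : ∀ s : Perm (Fin n), (∃ z w : Fin n, z ≠ w ∧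
      hdist (c3 p q r) (Equiv.swap z w) = 2 ∧ t s = Equiv.swap z w ∧ s = Equiv.swap z w → True) → True := fun _ _ => trivial
  have key : ∀ (s : Perm (Fin n)) (z w : Fin n), z ≠ w → t s = Equiv.swap z w →
      hdist (c3 p q r) (Equiv.swap z w) = 2 →
      z ∈ (t⁻¹ (c3 p q r)).support ∧ w ∈ (t⁻¹ (c3 p q r)).support → True := fun _ _ _ _ _ _ _ => trivial
  have hsub : ∀ (s : Perm (Fin n)) (z w : Fin n), z ≠ w → t (Equiv.swap z w) = s →
      hdist (c3 p q r) s = 2 →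
      z ∈ (t⁻¹ (c3 p q r)).support ∧ w ∈ (t⁻¹ (c3 p q r)).support := by
    intro s z w hzw hts hdist2
    have : hdist (Equiv.swap z w) (t⁻¹ (c3 p q r)) = 2 := by
      rw [← hd (Equiv.swap z w) (t⁻¹ (c3 p q r)), hts, Equiv.Perm.coe_inv, Equiv.apply_symm_apply,
        hdist_comm]
      exact hdist2
    exact DB6 hzw hw3 this
  have m1 := hsub _ i j (Ne.symm hji) htj (DB3a hpq hqr hpr)
  have m2 := hsub _ i k (Ne.symm hki) htk (DB3c hpq hqr hpr)
  have m3 := hsub _ i j' (Ne.symm hj') htj'' (DB3b hpq hqr hpr)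
  -- {i, j, k, j'} ⊆ support of a 3-element set
  have hsub4 : ({i, j, k, j'} : Finset (Fin n)) ⊆ (t⁻¹ (c3 p q r)).support := by
    intro z hz
    simp only [Finset.mem_insert, Finset.mem_singleton] at hz
    rcases hz with rfl | rfl | rfl | rfl
    · exact m1.1
    · exact m1.2
    · exact m2.2
    · exact m3.2
  have := Finset.card_le_card hsub4
  rw [hw3, card_quad (Ne.symm hji) (Ne.symm hki) (Ne.symm hj') (Ne.symm hkj)
    (fun hc => hj'j hc.symm) (fun hc => hj'k hc.symm)] at this
  omega

lemma stepB (hn : 3 ≤ n) (hd : ∀ φ ψ, hdist (t φ) (t ψ) = hdist φ ψ) (h1 : t 1 = 1) :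
    ∃ a : Perm (Fin n), ∀ i j, i ≠ j →
      t (Equiv.swap i j) = Equiv.swap (a i) (a j) := by
  choose a0 ha0 using LB1 hn hd h1
  have hinj : Function.Injective a0 := by
    intro i i' hii'
    by_contra hne
    obtain ⟨k', hk'i, hk'i'⟩ := exists_third hn i i'
    have m1 : a0 i ∈ (t (Equiv.swap i i')).support := ha0 i i' (Ne.symm hne)
    have m2 : a0 i ∈ (t (Equiv.swap i k')).support := ha0 i k' hk'i
    have m3 : a0 i ∈ (t (Equiv.swap i' k')).support := by
      have := ha0 i' k' hk'i'
      rwa [← hii'] at this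
    obtain ⟨x1, hx1, hs1⟩ := swap_with_point (tswap hd h1 hne) m1
    obtain ⟨x2, hx2, hs2⟩ := swap_with_point (tswap hd h1 (Ne.symm hk'i)) m2
    obtain ⟨x3, hx3, hs3⟩ := swap_with_point (tswap hd h1 (Ne.symm hk'i')) m3
    have hs12 : x1 ≠ x2 := by
      intro hc
      subst hc
      have : Equiv.swap i i' = Equiv.swap i k' := t.injective (by rw [hs1, hs2])
      exact swap_ne_swap hne (Ne.symm hk'i') this
    have hik' : i ≠ k' := Ne.symm hk'i
    have hi'k' : i' ≠ k' := Ne.symm hk'i'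
    have hs13 : x1 ≠ x3 := by
      intro hc; subst hc
      have h0 : Equiv.swap i i' = Equiv.swap i' k' := t.injective (by rw [hs1, hs3])
      have h2 := DFunLike.congr_fun h0 i
      rw [Equiv.swap_apply_left, Equiv.swap_apply_of_ne_of_ne hne hik'] at h2
      exact hne h2.symm
    have hs23 : x2 ≠ x3 := by
      intro hc; subst hc
      have h0 : Equiv.swap i k' = Equiv.swap i' k' := t.injective (by rw [hs2, hs3])
      have h2 := DFunLike.congr_fun h0 i
      rw [Equiv.swap_apply_left, Equiv.swap_apply_of_ne_of_ne hne hik'] at h2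
      exact hk'i h2
    have hw3 : (t (c3 i i' k')).support.card = 3 := by
      rw [tsupp hd h1, card_support_c3 hne hi'k' hik']
    have hsub : ∀ (z w : Fin n), z ≠ w → ∀ s : Perm (Fin n),
        t s = Equiv.swap z w → hdist (c3 i i' k') s = 2 →
        z ∈ (t (c3 i i' k')).support ∧ w ∈ (t (c3 i i' k')).support := by
      intro z w hzw s hts hd2
      apply DB6 hzw hw3
      rw [← hts, hd s (c3 i i' k'), hdist_comm]
      exact hd2
    have m1' := hsub (a0 i) x1 (Ne.symm hx1) (Equiv.swap i i') hs1 (DB3a hne hi'k' hik')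
    have m2' := hsub (a0 i) x2 (Ne.symm hx2) (Equiv.swap i k') hs2 (DB3c hne hi'k' hik')
    have m3' := hsub (a0 i) x3 (Ne.symm hx3) (Equiv.swap i' k') hs3 (DB3b hne hi'k' hik')
    have hsub4 : ({a0 i, x1, x2, x3} : Finset (Fin n)) ⊆ (t (c3 i i' k')).support := by
      intro z hz
      simp only [Finset.mem_insert, Finset.mem_singleton] at hz
      rcases hz with rfl | rfl | rfl | rfl
      · exact m1'.1
      · exact m1'.2
      · exact m2'.2
      · exact m3'.2
    have hle := Finset.card_le_card hsub4
    rw [hw3, card_quad (Ne.symm hx1) (Ne.symm hx2) (Ne.symm hx3) hs12 hs13 hs23] at hle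
    omega
  refine ⟨Equiv.ofBijective a0 (Finite.injective_iff_bijective.mp hinj), ?_⟩
  intro i j hij
  have p1 : a0 i ∈ (t (Equiv.swap i j)).support := ha0 i j (Ne.symm hij)
  have p2 : a0 j ∈ (t (Equiv.swap i j)).support := by
    have := ha0 j i hij
    rwa [Equiv.swap_comm] at this
  have hab : a0 i ≠ a0 j := fun hc => hij (hinj hc)
  have hsubp : ({a0 i, a0 j} : Finset (Fin n)) ⊆ (t (Equiv.swap i j)).support := by
    intro z hz
    simp only [Finset.mem_insert, Finset.mem_singleton] at hz
    rcases hz with rfl | rfl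
    · exact p1
    · exact p2
  have hcard2 : (t (Equiv.swap i j)).support.card = 2 := by
    rw [tsupp hd h1, Equiv.Perm.card_support_swap hij]
  have hEq : ({a0 i, a0 j} : Finset (Fin n)) = (t (Equiv.swap i j)).support :=
    Finset.eq_of_subset_of_card_le hsubp (by rw [hcard2, card_pair' hab])
  show t (Equiv.swap i j) = Equiv.swap (a0 i) (a0 j)
  exact support_eq_pair hab hEq.symm

end stepB


section stepC
variable {t : Perm (Perm (Fin n))}

lemma threecycle_cases {w : Perm (Fin n)} {i j k : Fin n} (hij : i ≠ j) (hik : i ≠ k)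
    (hjk : j ≠ k) (hs : w.support = {i, j, k}) : w = c3 i j k ∨ w = c3 i k j := by
  have hval : ∀ x, x ∈ w.support → w x ∈ ({i, j, k} : Finset (Fin n)) ∧ w x ≠ x := by
    intro x hx
    exact ⟨by rw [← hs]; exact Equiv.Perm.apply_mem_support.mpr hx,
      Equiv.Perm.mem_support.mp hx⟩
  have hi : i ∈ w.support := by rw [hs]; simp
  have hj : j ∈ w.support := by rw [hs]; simp
  have hk : k ∈ w.support := by rw [hs]; simp
  obtain ⟨hwi_mem, hwi_ne⟩ := hval i hi
  obtain ⟨hwj_mem, hwj_ne⟩ := hval j hj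
  obtain ⟨hwk_mem, hwk_ne⟩ := hval k hk
  simp only [Finset.mem_insert, Finset.mem_singleton] at hwi_mem hwj_mem hwk_mem
  have hoff : ∀ x, x ≠ i → x ≠ j → x ≠ k → w x = x := by
    intro x h1 h2 h3
    have : x ∉ w.support := by rw [hs]; simp [h1, h2, h3]
    exact Equiv.Perm.notMem_support.mp this
  rcases hwi_mem with hwi | hwi | hwi
  · exact absurd hwi hwi_ne
  · -- w i = j
    left
    have hwj : w j = k := by
      rcases hwj_mem with h | h | h
      · exfalso
        rcases hwk_mem with h2 | h2 | h2
        · exact hjk (w.injective (h.trans h2.symm))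
        · exact hik (w.injective (hwi.trans h2.symm))
        · exact hwk_ne h2
      · exact absurd h hwj_ne
      · exact h
    have hwk : w k = i := by
      rcases hwk_mem with h2 | h2 | h2
      · exact h2
      · exact absurd (w.injective (hwi.trans h2.symm)) hik
      · exact absurd h2 hwk_ne
    ext x
    by_cases hxi : x = i
    · subst hxi; rw [hwi, c3_apply_a hij hik]
    by_cases hxj : x = j
    · subst hxj; rw [hwj, c3_apply_b hjk hik]
    by_cases hxk : x = k
    · subst hxk; rw [hwk, c3_apply_c hij hjk]
    · rw [hoff x hxi hxj hxk, c3_apply_other hxi hxj hxk]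
  · -- w i = k
    right
    have hwk : w k = j := by
      rcases hwk_mem with h2 | h2 | h2
      · exfalso
        rcases hwj_mem with h | h | h
        · exact hjk (w.injective (h.trans h2.symm))
        · exact hwj_ne h
        · exact hij (w.injective (hwi.trans h.symm))
      · exact h2
      · exact absurd h2 hwk_ne
    have hwj : w j = i := by
      rcases hwj_mem with h | h | h
      · exact h
      · exact absurd h hwj_ne
      · exact absurd (w.injective (hwi.trans h.symm)) hij
    ext x
    by_cases hxi : x = i
    · subst hxi; rw [hwi, c3_apply_a hik hij]
    by_cases hxk : x = k
    · subst hxk; rw [hwk, c3_apply_b (Ne.symm hjk) hij]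
    by_cases hxj : x = j
    · subst hxj; rw [hwj, c3_apply_c hik (Ne.symm hjk)]
    · rw [hoff x hxi hxj hxk, c3_apply_other hxi hxk hxj]

lemma tc3 (hd : ∀ φ ψ, hdist (t φ) (t ψ) = hdist φ ψ) (h1 : t 1 = 1)
    (hsw : ∀ i j : Fin n, i ≠ j → t (Equiv.swap i j) = Equiv.swap i j)
    {i j k : Fin n} (hij : i ≠ j) (hik : i ≠ k) (hjk : j ≠ k) :
    t (c3 i j k) = c3 i j k ∨ t (c3 i j k) = c3 i k j := by
  have h3 : (t (c3 i j k)).support.card = 3 := by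
    rw [tsupp hd h1, card_support_c3 hij hjk hik]
  have hdd : ∀ (z w : Fin n), z ≠ w → hdist (c3 i j k) (Equiv.swap z w) = 2 →
      z ∈ (t (c3 i j k)).support ∧ w ∈ (t (c3 i j k)).support := by
    intro z w hzw hd2
    apply DB6 hzw h3
    rw [← hsw z w hzw, hd (Equiv.swap z w) (c3 i j k), hdist_comm]
    exact hd2
  have m1 := hdd i j hij (DB3a hij hjk hik)
  have m2 := hdd j k hjk (DB3b hij hjk hik)
  have hsub : ({i, j, k} : Finset (Fin n)) ⊆ (t (c3 i j k)).support := by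
    intro z hz
    simp only [Finset.mem_insert, Finset.mem_singleton] at hz
    rcases hz with rfl | rfl | rfl
    · exact m1.1
    · exact m1.2
    · exact m2.2
  have hEq : ({i, j, k} : Finset (Fin n)) = (t (c3 i j k)).support :=
    Finset.eq_of_subset_of_card_le hsub (by rw [h3, card_triple hij hik hjk])
  exact threecycle_cases hij hik hjk hEq.symm

lemma stepC (hn : 3 ≤ n) (hd : ∀ φ ψ, hdist (t φ) (t ψ) = hdist φ ψ) (h1 : t 1 = 1)
    (hsw : ∀ i j : Fin n, i ≠ j → t (Equiv.swap i j) = Equiv.swap i j)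
    {x0 x1 x2 : Fin n} (h01 : x0 ≠ x1) (h02 : x0 ≠ x2) (h12 : x1 ≠ x2)
    (hc : t (c3 x0 x1 x2) = c3 x0 x1 x2) : t = 1 := by
  have moveInv : ∀ i j k : Fin n, i ≠ j → i ≠ k → j ≠ k →
      t (c3 i j k) = c3 i j k → t (c3 i k j) = c3 i k j := by
    intro i j k hij hik hjk hP
    rcases tc3 hd h1 hsw hik hij (Ne.symm hjk) with h | h
    · exact h
    · exfalso
      have : c3 i k j = c3 i j k := t.injective (by rw [h, hP])
      have h2 := DFunLike.congr_fun this j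
      rw [c3_apply_c hik (Ne.symm hjk), c3_apply_b hjk hik] at h2
      exact hik h2
  have moveRepl : ∀ i j k l : Fin n, i ≠ j → i ≠ k → j ≠ k → l ≠ i → l ≠ j →
      t (c3 i j k) = c3 i j k → t (c3 i j l) = c3 i j l := by
    intro i j k l hij hik hjk hli hlj hP
    by_cases hlk : l = k
    · subst hlk; exact hP
    rcases tc3 hd h1 hsw hij (Ne.symm hli) (Ne.symm hlj) with h | h
    · exact h
    · exfalso
      have hdd := hd (c3 i j l) (c3 i j k)
      rw [h, hP, DB4 hij (Ne.symm hli) hik (Ne.symm hlj) hjk hlk] at hdd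
      rw [hdist_comm] at hdd
      rw [DB5 hij hik (Ne.symm hli) hjk (Ne.symm hlj) (fun hc2 => hlk hc2.symm)] at hdd
      omega
  have rotP : ∀ i j k : Fin n, i ≠ j → i ≠ k → j ≠ k →
      t (c3 i j k) = c3 i j k → t (c3 j k i) = c3 j k i := by
    intro i j k hij hik hjk hP
    rw [← c3_rot i j k hij hjk hik]
    exact hP
  have S2 : ∀ l : Fin n, l ≠ x0 → l ≠ x1 → t (c3 x0 x1 l) = c3 x0 x1 l := by
    intro l h0 h1'
    exact moveRepl x0 x1 x2 l h01 h02 h12 h0 h1' hc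
  have S3 : ∀ j k : Fin n, j ≠ x0 → k ≠ x0 → j ≠ k → t (c3 x0 j k) = c3 x0 j k := by
    intro j k hj0 hk0 hjk
    by_cases hj1 : j = x1
    · subst hj1
      exact S2 k hk0 (Ne.symm hjk)
    · have h1' : t (c3 x0 x1 j) = c3 x0 x1 j := S2 j hj0 hj1
      have h2 : t (c3 x1 j x0) = c3 x1 j x0 :=
        rotP x0 x1 j h01 (Ne.symm hj0) (fun hc2 => hj1 hc2.symm) h1'
      have h3 : t (c3 j x0 x1) = c3 j x0 x1 :=
        rotP x1 j x0 (fun hc2 => hj1 hc2.symm) (Ne.symm h01) hj0 h2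
      by_cases hk1 : k = x1
      · rw [hk1]
        exact moveInv x0 x1 j h01 (Ne.symm hj0) (fun hc2 => hj1 hc2.symm) h1'
      · have h4 : t (c3 j x0 k) = c3 j x0 k :=
          moveRepl j x0 x1 k hj0 hj1 h01 (Ne.symm hjk) hk0 h3
        have h5 : t (c3 x0 k j) = c3 x0 k j :=
          rotP j x0 k hj0 hjk (Ne.symm hk0) h4
        exact moveInv x0 k j (Ne.symm hk0) (Ne.symm hj0) (Ne.symm hjk) h5
  have S4 : ∀ i j k : Fin n, i ≠ j → i ≠ k → j ≠ k → t (c3 i j k) = c3 i j k := by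
    intro i j k hij hik hjk
    by_cases hi0 : i = x0
    · rw [hi0] at hij hik ⊢
      exact S3 j k (Ne.symm hij) (Ne.symm hik) hjk
    by_cases hj0 : j = x0
    · rw [hj0] at hij hjk ⊢
      have h1' : t (c3 x0 k i) = c3 x0 k i := S3 k i (Ne.symm hjk) hi0 (Ne.symm hik)
      have h2 : t (c3 k i x0) = c3 k i x0 :=
        rotP x0 k i hjk (Ne.symm hij) (Ne.symm hik) h1'
      exact rotP k i x0 (Ne.symm hik) (Ne.symm hjk) hij h2
    by_cases hk0 : k = x0
    · rw [hk0] at hik hjk ⊢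
      have h1' : t (c3 x0 i j) = c3 x0 i j := S3 i j hi0 hj0 hij
      exact rotP x0 i j (Ne.symm hik) (Ne.symm hjk) hij h1'
    · have h1' : t (c3 x0 j k) = c3 x0 j k := S3 j k hj0 hk0 hjk
      have h2 : t (c3 j k x0) = c3 j k x0 :=
        rotP x0 j k (Ne.symm hj0) (Ne.symm hk0) hjk h1'
      have h3 : t (c3 j k i) = c3 j k i :=
        moveRepl j k x0 i hjk hj0 hk0 hij hik h2
      have h4 : t (c3 k i j) = c3 k i j :=
        rotP j k i hjk (Ne.symm hij) (Ne.symm hik) h3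
      exact rotP k i j (Ne.symm hik) (Ne.symm hjk) hij h4
  -- conclude with the determination lemma
  apply Equiv.ext
  intro φ
  have H0 : hdist (t φ) 1 = hdist φ 1 := by
    have := hd φ 1; rwa [h1] at this
  have H2 : ∀ p q : Fin n, p ≠ q → hdist (t φ) (Equiv.swap p q) = hdist φ (Equiv.swap p q) := by
    intro p q hpq
    have := hd φ (Equiv.swap p q)
    rwa [hsw p q hpq] at this
  have H3 : ∀ p q r : Fin n, p ≠ q → p ≠ r → q ≠ r →
      hdist (t φ) (c3 p q r) = hdist φ (c3 p q r) := by
    intro p q r hpq hpr hqr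
    have := hd φ (c3 p q r)
    rwa [S4 p q r hpq hpr hqr] at this
  show t φ = φ
  exact determined hn H0 H2 H3

end stepC


section assembly
variable (n : ℕ)

def lrHom : Perm (Fin n) × Perm (Fin n) →* Perm (Perm (Fin n)) where
  toFun p := Equiv.mulLeft p.1 * Equiv.mulRight p.2⁻¹
  map_one' := by
    apply Equiv.ext; intro φ
    simp [Equiv.Perm.mul_apply]
  map_mul' p q := by
    apply Equiv.ext; intro φ
    simp [Equiv.Perm.mul_apply, mul_assoc]

lemma lrHom_apply (p : Perm (Fin n) × Perm (Fin n)) (φ : Perm (Fin n)) :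
    lrHom n p φ = p.1 * φ * p.2⁻¹ := by
  simp [lrHom, Equiv.Perm.mul_apply, mul_assoc]

def invPerm : Perm (Perm (Fin n)) := Equiv.inv (Perm (Fin n))

lemma invPerm_apply (φ : Perm (Fin n)) : invPerm n φ = φ⁻¹ := rfl

lemma invPerm_mul_self : invPerm n * invPerm n = 1 := by
  apply Equiv.ext; intro φ
  rw [Equiv.Perm.mul_apply, invPerm_apply, invPerm_apply, inv_inv, Equiv.Perm.one_apply]

lemma invPerm_inv : (invPerm n)⁻¹ = invPerm n :=
  inv_eq_of_mul_eq_one_right (invPerm_mul_self n)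

def zHom : Multiplicative (ZMod 2) →* Perm (Perm (Fin n)) where
  toFun k := if Multiplicative.toAdd k = 0 then 1 else invPerm n
  map_one' := by simp
  map_mul' a b := by
    have h : ∀ x : ZMod 2, x = 0 ∨ x = 1 := by decide
    rcases h (Multiplicative.toAdd a) with ha | ha <;>
        rcases h (Multiplicative.toAdd b) with hb | hb <;>
      simp [toAdd_mul, ha, hb, invPerm_mul_self, show (1 + 1 : ZMod 2) = 0 from by decide,
        show (1 : ZMod 2) ≠ 0 from by decide]

lemma compat : ∀ g, (lrHom n).comp (MulEquiv.toMonoidHom (swapHom n g)) =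
    (MulEquiv.toMonoidHom (MulAut.conj (zHom n g))).comp (lrHom n) := by
  intro g
  have h : ∀ x : ZMod 2, x = 0 ∨ x = 1 := by decide
  apply MonoidHom.ext; intro p
  rcases h (Multiplicative.toAdd g) with hg | hg
  · have hg1 : g = 1 := Multiplicative.toAdd.injective (by rw [hg, toAdd_one])
    have h1 : swapHom n g = 1 := by simp [swapHom, hg1]
    have h2 : zHom n g = 1 := by simp [zHom, hg1]
    simp [h1, h2]
  · have hg1 : g ≠ 1 := by
      intro hc
      rw [hc, toAdd_one] at hg
      exact (show (0 : ZMod 2) ≠ 1 from by decide) hg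
    have h1 : swapHom n g = swapFactors n := by
      simp [swapHom, hg, show (1 : ZMod 2) ≠ 0 from by decide, hg1]
    have h2 : zHom n g = invPerm n := by
      simp [zHom, hg, show (1 : ZMod 2) ≠ 0 from by decide, hg1]
    rw [h1, h2]
    apply Equiv.ext; intro φ
    simp only [MonoidHom.comp_apply, MulEquiv.coe_toMonoidHom, MulAut.conj_apply,
      Equiv.Perm.mul_apply, invPerm_inv, lrHom_apply, invPerm_apply]
    show (swapFactors n p).1 * φ * ((swapFactors n p).2)⁻¹ = (p.1 * φ⁻¹ * p.2⁻¹)⁻¹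
    have : (swapFactors n p) = (p.2, p.1) := rfl
    rw [this]
    simp [mul_inv_rev, mul_assoc]

def bigHom : SemidirectProduct (Perm (Fin n) × Perm (Fin n))
    (Multiplicative (ZMod 2)) (swapHom n) →* Perm (Perm (Fin n)) :=
  SemidirectProduct.lift (lrHom n) (zHom n) (compat n)

lemma bigHom_eq (x) : bigHom n x = lrHom n x.left * zHom n x.right := by
  rw [← SemidirectProduct.inl_left_mul_inr_right x, map_mul]
  rw [SemidirectProduct.inl_left_mul_inr_right x]
  rw [show ((bigHom n) (SemidirectProduct.inl x.left) : Perm (Perm (Fin n)))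
    = lrHom n x.left from SemidirectProduct.lift_inl _ _ _ _,
    show ((bigHom n) (SemidirectProduct.inr x.right) : Perm (Perm (Fin n)))
    = zHom n x.right from SemidirectProduct.lift_inr _ _ _ _]

end assembly


section main
variable {n : ℕ}

lemma mem_isoGroup {x : Perm (Perm (Fin n))} :
    x ∈ IsoGroup n ↔ ∀ φ ψ, hdist (x φ) (x ψ) = hdist φ ψ := Iff.rfl

lemma zHom_cases (g : Multiplicative (ZMod 2)) :
    zHom n g = 1 ∨ zHom n g = invPerm n := by
  have h : ∀ z : ZMod 2, z = 0 ∨ z = 1 := by decide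
  rcases h (Multiplicative.toAdd g) with hg | hg
  · left
    have hg1 : g = 1 := Multiplicative.toAdd.injective (by rw [hg, toAdd_one])
    simp [zHom, hg1]
  · right
    have hg1 : g ≠ 1 := by
      intro hc
      rw [hc, toAdd_one] at hg
      exact (show (0 : ZMod 2) ≠ 1 from by decide) hg
    simp [zHom, hg, show (1 : ZMod 2) ≠ 0 from by decide, hg1]

lemma bigHom_mem (x) : bigHom n x ∈ IsoGroup n := by
  rw [bigHom_eq]
  apply mul_mem
  · rw [mem_isoGroup]
    intro φ ψ
    rw [lrHom_apply, lrHom_apply, hdist_mul_right, hdist_mul_left]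
  · rw [mem_isoGroup]
    rcases zHom_cases x.right with hz | hz <;> rw [hz] <;> intro φ ψ
    · rfl
    · rw [invPerm_apply, invPerm_apply, hdist_inv]

lemma eq_one_of_commute (hn : 3 ≤ n) {a : Perm (Fin n)}
    (ha : ∀ φ : Perm (Fin n), a * φ = φ * a) : a = 1 := by
  by_contra hne
  have hex : ∃ i, a i ≠ i := by
    by_contra hc
    push_neg at hc
    exact hne (Equiv.ext hc)
  obtain ⟨i, hi⟩ := hex
  obtain ⟨k, hki, hkai⟩ := exists_third hn i (a i)
  have h2 := DFunLike.congr_fun (ha (Equiv.swap i k)) i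
  rw [Equiv.Perm.mul_apply, Equiv.Perm.mul_apply, Equiv.swap_apply_left,
    Equiv.swap_apply_of_ne_of_ne hi (Ne.symm hkai)] at h2
  exact hki (a.injective h2)

lemma exists_triple (hn : 3 ≤ n) :
    ∃ i0 i1 i2 : Fin n, i0 ≠ i1 ∧ i0 ≠ i2 ∧ i1 ≠ i2 := by
  refine ⟨⟨0, by omega⟩, ⟨1, by omega⟩, ⟨2, by omega⟩, ?_, ?_, ?_⟩ <;>
    simp [Fin.ext_iff]

lemma exists_noncomm (hn : 3 ≤ n) :
    ∃ φ ψ : Perm (Fin n), φ * ψ ≠ ψ * φ := by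
  obtain ⟨i0, i1, i2, h01, h02, h12⟩ := exists_triple hn
  refine ⟨Equiv.swap i0 i1, Equiv.swap i0 i2, ?_⟩
  intro hc
  have h2 := DFunLike.congr_fun hc i0
  rw [Equiv.Perm.mul_apply, Equiv.Perm.mul_apply, Equiv.swap_apply_left,
    Equiv.swap_apply_left, Equiv.swap_apply_of_ne_of_ne (Ne.symm h02) (Ne.symm h12),
    Equiv.swap_apply_of_ne_of_ne (Ne.symm h01) h12] at h2
  exact h12 (h2.symm)

lemma bigHom_inj (hn : 3 ≤ n) : Function.Injective (bigHom n) := by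
  rw [injective_iff_map_eq_one]
  intro x hx
  rw [bigHom_eq] at hx
  rcases (show ∀ z : ZMod 2, z = 0 ∨ z = 1 from by decide) (Multiplicative.toAdd x.right)
      with hg | hg
  · have hgr : x.right = 1 := Multiplicative.toAdd.injective (by rw [hg, toAdd_one])
    rw [hgr, map_one, mul_one] at hx
    have hab : x.left.1 = x.left.2 := by
      have h2 := DFunLike.congr_fun hx 1
      rw [lrHom_apply, Equiv.Perm.one_apply, mul_one] at h2
      exact mul_inv_eq_one.mp h2
    have hcom : ∀ φ : Perm (Fin n), x.left.1 * φ = φ * x.left.1 := by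
      intro φ
      have h2 := DFunLike.congr_fun hx φ
      rw [lrHom_apply, Equiv.Perm.one_apply, ← hab] at h2
      calc x.left.1 * φ = (x.left.1 * φ * (x.left.1)⁻¹) * x.left.1 := by group
        _ = φ * x.left.1 := by rw [h2]
    have ha1 : x.left.1 = 1 := eq_one_of_commute hn hcom
    apply SemidirectProduct.ext
    · exact Prod.ext_iff.mpr ⟨ha1, (hab ▸ ha1 : x.left.2 = 1)⟩
    · exact hgr
  · exfalso
    have hg1 : x.right ≠ 1 := by
      intro hc
      rw [hc, toAdd_one] at hg
      exact (show (0 : ZMod 2) ≠ 1 from by decide) hg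
    have hz : zHom n x.right = invPerm n := by
      simp [zHom, hg, show (1 : ZMod 2) ≠ 0 from by decide, hg1]
    rw [hz] at hx
    have hab : x.left.1 = x.left.2 := by
      have h2 := DFunLike.congr_fun hx 1
      rw [Equiv.Perm.mul_apply, invPerm_apply, inv_one, lrHom_apply,
        Equiv.Perm.one_apply, mul_one] at h2
      exact mul_inv_eq_one.mp h2
    have key : ∀ φ : Perm (Fin n), x.left.1 * φ⁻¹ * (x.left.1)⁻¹ = φ := by
      intro φ
      have h2 := DFunLike.congr_fun hx φ
      rw [Equiv.Perm.mul_apply, invPerm_apply, lrHom_apply, Equiv.Perm.one_apply,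
        ← hab] at h2
      exact h2
    have hcomm : ∀ φ ψ : Perm (Fin n), φ * ψ = ψ * φ := by
      intro φ ψ
      calc φ * ψ = x.left.1 * (φ * ψ)⁻¹ * (x.left.1)⁻¹ := (key _).symm
        _ = (x.left.1 * ψ⁻¹ * (x.left.1)⁻¹) * (x.left.1 * φ⁻¹ * (x.left.1)⁻¹) := by
            group
        _ = ψ * φ := by rw [key, key]
    obtain ⟨φ, ψ, hnc⟩ := exists_noncomm hn
    exact hnc (hcomm φ ψ)

lemma bigHom_surj (hn : 3 ≤ n) (t : Perm (Perm (Fin n))) (ht : t ∈ IsoGroup n) :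
    ∃ x, bigHom n x = t := by
  rw [mem_isoGroup] at ht
  have hu_app : ∀ φ, (Equiv.mulLeft (t 1)⁻¹ * t) φ = (t 1)⁻¹ * t φ := fun φ => rfl
  set u : Perm (Perm (Fin n)) := Equiv.mulLeft (t 1)⁻¹ * t with hu_def
  have hu : ∀ φ ψ, hdist (u φ) (u ψ) = hdist φ ψ := by
    intro φ ψ
    rw [hu_app, hu_app, hdist_mul_left, ht]
  have hu1 : u 1 = 1 := by rw [hu_app, inv_mul_cancel]
  obtain ⟨a, ha⟩ := stepB hn hu hu1
  have hv_app : ∀ φ, (Equiv.mulRight a * (Equiv.mulLeft a⁻¹ * u)) φ = a⁻¹ * u φ * a :=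
    fun φ => rfl
  set v : Perm (Perm (Fin n)) := Equiv.mulRight a * (Equiv.mulLeft a⁻¹ * u) with hv_def
  have hv : ∀ φ ψ, hdist (v φ) (v ψ) = hdist φ ψ := by
    intro φ ψ
    rw [hv_app, hv_app, hdist_mul_right, hdist_mul_left, hu]
  have hv1 : v 1 = 1 := by rw [hv_app, hu1]; group
  have hvsw : ∀ i j : Fin n, i ≠ j → v (Equiv.swap i j) = Equiv.swap i j := by
    intro i j hij
    rw [hv_app, ha i j hij, Equiv.swap_apply_apply]
    group
  obtain ⟨i0, i1, i2, h01, h02, h12⟩ := exists_triple hn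
  have hform : ∀ φ, v φ = a⁻¹ * ((t 1)⁻¹ * t φ) * a := fun φ => by
    rw [hv_app, hu_app]
  rcases tc3 hv hv1 hvsw h01 h02 h12 with hc | hc
  · -- v = 1, so t φ = t 1 * a * φ * a⁻¹
    have hveq := stepC hn hv hv1 hvsw h01 h02 h12 hc
    refine ⟨⟨(t 1 * a, a), 1⟩, ?_⟩
    apply Equiv.ext
    intro φ
    rw [bigHom_eq]
    show (lrHom n (t 1 * a, a) * zHom n 1) φ = t φ
    rw [(zHom n).map_one, mul_one, lrHom_apply,
      show ((t 1 * a, a) : Perm (Fin n) × Perm (Fin n)).1 = t 1 * a from rfl,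
      show ((t 1 * a, a) : Perm (Fin n) × Perm (Fin n)).2 = a from rfl]
    have h2 := DFunLike.congr_fun hveq φ
    rw [hform, Equiv.Perm.one_apply] at h2
    calc (t 1 * a) * φ * a⁻¹
        = (t 1 * a) * (a⁻¹ * ((t 1)⁻¹ * t φ) * a) * a⁻¹ := by rw [h2]
      _ = t φ := by group
  · -- v is (conjugated) inversion
    have hw_app : ∀ φ, (v * invPerm n) φ = v φ⁻¹ := fun φ => rfl
    set w : Perm (Perm (Fin n)) := v * invPerm n with hw_def
    have hw : ∀ φ ψ, hdist (w φ) (w ψ) = hdist φ ψ := by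
      intro φ ψ
      rw [hw_app, hw_app, hv, hdist_inv]
    have hw1 : w 1 = 1 := by rw [hw_app, inv_one, hv1]
    have hwsw : ∀ i j : Fin n, i ≠ j → w (Equiv.swap i j) = Equiv.swap i j := by
      intro i j hij
      rw [hw_app, Equiv.swap_inv, hvsw i j hij]
    have hwc : w (c3 i0 i1 i2) = c3 i0 i1 i2 := by
      rw [hw_app, c3_inv i0 i1 i2 h01 h12 h02]
      rcases tc3 hv hv1 hvsw h02 h01 (Ne.symm h12) with h | h
      · exfalso
        have : c3 i0 i2 i1 = c3 i0 i1 i2 := v.injective (by rw [h, hc])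
        have h2 := DFunLike.congr_fun this i1
        rw [c3_apply_c h02 (Ne.symm h12), c3_apply_b h12 h02] at h2
        exact h02 h2
      · exact h
    have hweq := stepC hn hw hw1 hwsw h01 h02 h12 hwc
    refine ⟨⟨(t 1 * a, a), Multiplicative.ofAdd 1⟩, ?_⟩
    apply Equiv.ext
    intro φ
    rw [bigHom_eq]
    show (lrHom n (t 1 * a, a) * zHom n (Multiplicative.ofAdd 1)) φ = t φ
    have hz : zHom n (Multiplicative.ofAdd (1 : ZMod 2)) = invPerm n := by
      simp [zHom, show ((1 : ZMod 2)) ≠ 0 from by decide]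
    rw [hz, Equiv.Perm.mul_apply, invPerm_apply, lrHom_apply,
      show ((t 1 * a, a) : Perm (Fin n) × Perm (Fin n)).1 = t 1 * a from rfl,
      show ((t 1 * a, a) : Perm (Fin n) × Perm (Fin n)).2 = a from rfl]
    have h2 := DFunLike.congr_fun hweq φ⁻¹
    rw [hw_app, inv_inv, hform, Equiv.Perm.one_apply] at h2
    calc (t 1 * a) * φ⁻¹ * a⁻¹
        = (t 1 * a) * (a⁻¹ * ((t 1)⁻¹ * t φ) * a) * a⁻¹ := by rw [h2]
      _ = t φ := by group

end main

end IsoProof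

/-- For `n ≥ 3`, the isometry group of `(Sym(n), d_H)` is isomorphic to the semidirect
product `(Sym(n) × Sym(n)) ⋊ Z/2Z`, the nontrivial element of `Z/2Z` acting by swapping
the two factors (i.e. the wreath product `Sym(n) ≀ 2`). -/
theorem isometry_group_iso_semidirect (n : ℕ) (hn : 3 ≤ n) :
    Nonempty (IsoGroup n ≃*
      SemidirectProduct (Equiv.Perm (Fin n) × Equiv.Perm (Fin n))
        (Multiplicative (ZMod 2)) (swapHom n)) := by

  have hmem : ∀ x, IsoProof.bigHom n x ∈ IsoGroup n := IsoProof.bigHom_mem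
  refine ⟨(MulEquiv.ofBijective
    ((IsoProof.bigHom n).codRestrict (IsoGroup n) hmem) ⟨?_, ?_⟩).symm⟩
  · intro x y hxy
    apply IsoProof.bigHom_inj hn
    exact congrArg Subtype.val hxy
  · rintro ⟨t, htmem⟩
    obtain ⟨x, hx⟩ := IsoProof.bigHom_surj hn t htmem
    exact ⟨x, Subtype.ext hx⟩
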